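/- Let n be a natural number and let F ⊆ SU(2)^6 be the subspace of tuples satisfying system (Fₙ). If (A₁, B₁, A₂, B₂, A₃, B₃) ∈ SU(2)^6 is a tuple whose six coordinates pairwise commute, then this tuple belongs to F, and it lies in the connected component of F (in the subspace topology) containing the identity tuple (1, 1, 1, 1, 1, 1). -/

import Mathlib

/-- `SU(2)`, i.e. `Matrix.specialUnitaryGroup (Fin 2) ℂ`, topologized as a subspace of the
`2 × 2` complex matrices (via the subtype topology). -/
abbrev SU2 := Matrix.specialUnitaryGroup (Fin 2) ℂ

/-- The group structure on `SU(2)` (inverse given by conjugate transpose). -/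
noncomputable instance : Group SU2 :=
  { (inferInstance : Monoid SU2) with
    inv := fun A => ⟨star A.1, by
      refine ⟨⟨?_, ?_⟩, ?_⟩
      · rw [star_star]; exact A.2.1.2
      · rw [star_star]; exact A.2.1.1
      · show Matrix.det (star A.1) = 1
        rw [Matrix.star_eq_conjTranspose, Matrix.det_conjTranspose]
        have h : Matrix.det A.1 = 1 := A.2.2
        rw [h, star_one]⟩
    inv_mul_cancel := fun A => Subtype.ext A.2.1.1 }

/-- The commutator `[a, b] = a * b * a⁻¹ * b⁻¹`. -/
def brk {G : Type*} [Group G] (a b : G) : G := a * b * a⁻¹ * b⁻¹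

/-- System `(Fₙ)` for a tuple `(A₁, B₁, A₂, B₂, A₃, B₃) ∈ SU(2)⁶`, where `X := [A₃,B₃]·A₁`
(natural-number powers). -/
def fixSys (n : ℕ) (A₁ B₁ A₂ B₂ A₃ B₃ : SU2) : Prop :=
  brk A₁ B₁ * brk A₂ B₂ * brk A₃ B₃ = 1 ∧
  (brk A₃ B₃ * A₁) ^ n * A₁ * ((brk A₃ B₃ * A₁) ^ n)⁻¹ = A₁ ∧
  A₁ ^ n = (brk A₃ B₃ * A₁) ^ n ∧
  (brk A₃ B₃ * A₁) ^ n * A₃ * ((brk A₃ B₃ * A₁) ^ n)⁻¹ = A₃ ∧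
  (brk A₃ B₃ * A₁) ^ n * B₃ * ((brk A₃ B₃ * A₁) ^ n)⁻¹ = B₃

/-- The set `F ⊆ SU(2)⁶` of tuples satisfying system `(Fₙ)`. -/
def Fset (n : ℕ) : Set (SU2 × SU2 × SU2 × SU2 × SU2 × SU2) :=
  {p | fixSys n p.1 p.2.1 p.2.2.1 p.2.2.2.1 p.2.2.2.2.1 p.2.2.2.2.2}

noncomputable section AbelianAux
namespace AbelianAux
open Matrix Complex

abbrev M2 := Matrix (Fin 2) (Fin 2) ℂ

/-- membership in a commuting configuration -/
lemma mem_Fset (n : ℕ) (a₁ b₁ a₂ b₂ a₃ b₃ : SU2) (h1 : a₁ * b₁ = b₁ * a₁)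
    (h2 : a₂ * b₂ = b₂ * a₂) (h3 : a₃ * b₃ = b₃ * a₃) (h4 : a₁ * a₃ = a₃ * a₁)
    (h5 : a₁ * b₃ = b₃ * a₁) : (a₁, b₁, a₂, b₂, a₃, b₃) ∈ Fset n := by
  have hb1 : brk a₁ b₁ = 1 := by rw [brk, h1]; group
  have hb2 : brk a₂ b₂ = 1 := by rw [brk, h2]; group
  have hb3 : brk a₃ b₃ = 1 := by rw [brk, h3]; group
  have key : ∀ c : SU2, a₁ * c = c * a₁ → a₁ ^ n * c * (a₁ ^ n)⁻¹ = c := by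
    intro c hc
    have h : a₁ ^ n * c = c * a₁ ^ n := (Commute.pow_left (hc : Commute a₁ c) n).eq
    rw [h, mul_assoc, mul_inv_cancel, mul_one]
  show fixSys n a₁ b₁ a₂ b₂ a₃ b₃
  refine ⟨by rw [hb1, hb2, hb3]; group, ?_, ?_, ?_, ?_⟩ <;> rw [hb3, one_mul]
  · exact key a₁ rfl
  · exact key a₃ h4
  · exact key b₃ h5

lemma su2_entries (A : M2) (h : A ∈ Matrix.specialUnitaryGroup (Fin 2) ℂ) :
    A 1 1 = star (A 0 0) ∧ A 1 0 = -star (A 0 1) ∧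
      A 0 0 * star (A 0 0) + A 0 1 * star (A 0 1) = 1 := by
  obtain ⟨hu, hdet⟩ := Matrix.mem_specialUnitaryGroup_iff.mp h
  have h1 : star A * A = 1 := hu.1
  have h2 : A * A.adjugate = 1 := by rw [Matrix.mul_adjugate, hdet, one_smul]
  have hsa : star A = A.adjugate := by
    calc star A = star A * (A * A.adjugate) := by rw [h2, mul_one]
    _ = (star A * A) * A.adjugate := by rw [mul_assoc]
    _ = A.adjugate := by rw [h1, one_mul]
  rw [Matrix.adjugate_fin_two] at hsa
  have e00 : star (A 0 0) = A 1 1 := by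
    have := congrFun (congrFun hsa 0) 0; simpa [Matrix.star_apply] using this
  have e01 : star (A 1 0) = -A 0 1 := by
    have := congrFun (congrFun hsa 0) 1; simpa [Matrix.star_apply] using this
  have hd : A 0 0 * A 1 1 - A 0 1 * A 1 0 = 1 := by rw [← Matrix.det_fin_two]; exact hdet
  have h10 : A 1 0 = -star (A 0 1) := by
    have := congrArg star e01; rw [star_star] at this; rw [this]; simp
  refine ⟨e00.symm, h10, ?_⟩
  rw [← e00, h10] at hd
  linear_combination hd

/-- commutant of a nonscalar 2×2 matrix -/
lemma commutant (A C : M2) (hAC : A * C = C * A)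
    (hns : A 0 1 ≠ 0 ∨ A 1 0 ≠ 0 ∨ A 0 0 ≠ A 1 1) :
    ∃ α β : ℂ, C = α • (1 : M2) + β • A := by
  set a := A 0 0; set b := A 0 1; set c := A 1 0; set d := A 1 1
  set m := C 0 0; set n := C 0 1; set p := C 1 0; set q := C 1 1
  have e00 : a * m + b * p = m * a + n * c := by
    have := congrFun (congrFun hAC 0) 0; simpa [Matrix.mul_apply, Fin.sum_univ_two] using this
  have e01 : a * n + b * q = m * b + n * d := by
    have := congrFun (congrFun hAC 0) 1; simpa [Matrix.mul_apply, Fin.sum_univ_two] using this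
  have e10 : c * m + d * p = p * a + q * c := by
    have := congrFun (congrFun hAC 1) 0; simpa [Matrix.mul_apply, Fin.sum_univ_two] using this
  have hCeq : ∀ α β : ℂ, m = α + β * a → n = β * b → p = β * c → q = α + β * d →
      C = α • (1 : M2) + β • A := by
    intro α β hm hn hp hq
    ext i j
    fin_cases i <;> fin_cases j <;>
      simp [Matrix.add_apply, Matrix.smul_apply, Matrix.one_apply] <;>
      [exact hm; exact hn; exact hp; exact hq]
  by_cases had : a = d
  · have hbc : b ≠ 0 ∨ c ≠ 0 := by
      rcases hns with h | h | h
      · exact Or.inl h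
      · exact Or.inr h
      · exact absurd had h
    rcases hbc with hb | hc
    · have hmq : q = m := by
        have h := mul_left_cancel₀ hb (show b * q = b * m by linear_combination e01 - n * had)
        exact h
      refine ⟨m - n / b * a, n / b, hCeq _ _ (by ring) (div_mul_cancel₀ n hb).symm ?_ ?_⟩
      · field_simp
        linear_combination e00
      · rw [hmq, ← had]; ring
    · have hmq : q = m := by
        have h := mul_right_cancel₀ hc (show q * c = m * c by linear_combination -e10 - p * had)
        exact h
      refine ⟨m - p / c * a, p / c, hCeq _ _ (by ring) ?_ (div_mul_cancel₀ p hc).symm ?_⟩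
      · field_simp
        linear_combination -e00
      · rw [hmq, ← had]; ring
  · have hsub : a - d ≠ 0 := sub_ne_zero.mpr had
    refine ⟨m - (m - q) / (a - d) * a, (m - q) / (a - d), hCeq _ _ (by ring) ?_ ?_ ?_⟩
    · field_simp
      linear_combination e01
    · field_simp
      linear_combination -e10
    · field_simp
      ring


section Proj

lemma starDecomp (E : M2) (hEs : Eᴴ = E) (z w : ℂ) :
    (z • E + w • (1 - E))ᴴ = star z • E + star w • (1 - E) := by
  rw [Matrix.conjTranspose_add, Matrix.conjTranspose_smul, Matrix.conjTranspose_smul,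
    Matrix.conjTranspose_sub, Matrix.conjTranspose_one, hEs]

lemma mul_expand (E : M2) (hE2 : E * E = E) (z w z' w' : ℂ) :
    (z • E + w • (1 - E)) * (z' • E + w' • (1 - E)) =
      (z * z') • E + (w * w') • (1 - E) := by
  have hEF : E * (1 - E) = 0 := by rw [mul_sub, mul_one, hE2, sub_self]
  have hFE : (1 - E) * E = 0 := by rw [sub_mul, one_mul, hE2, sub_self]
  have hFF : (1 - E) * (1 - E) = 1 - E := by rw [sub_mul, one_mul, hEF, sub_zero]
  simp only [add_mul, mul_add, smul_mul_assoc, mul_smul_comm, smul_smul, hE2, hEF, hFE, hFF,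
    smul_zero, add_zero, zero_add]
  rw [mul_comm z' z, mul_comm w' w]

lemma star_z_mul (z : ℂ) (hz : ‖z‖ = 1) : star z * z = 1 := by
  have h1 : Complex.normSq z = 1 := by
    rw [Complex.normSq_eq_norm_sq, hz, one_pow]
  rw [Complex.star_def, mul_comm, Complex.mul_conj, h1, Complex.ofReal_one]

lemma Umem (E : M2) (hE2 : E * E = E) (hEs : Eᴴ = E) (htr : E 0 0 + E 1 1 = 1)
    (hdt : E 0 0 * E 1 1 = E 0 1 * E 1 0) (z : ℂ) (hz : ‖z‖ = 1) :
    z • E + star z • (1 - E) ∈ Matrix.specialUnitaryGroup (Fin 2) ℂ := by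
  have hzz : star z * z = 1 := star_z_mul z hz
  have hstar : star (z • E + star z • (1 - E)) = star z • E + z • (1 - E) := by
    rw [Matrix.star_eq_conjTranspose, Matrix.conjTranspose_add, Matrix.conjTranspose_smul,
      Matrix.conjTranspose_smul, Matrix.conjTranspose_sub, Matrix.conjTranspose_one, hEs,
      star_star]
  rw [Matrix.mem_specialUnitaryGroup_iff]
  constructor
  · rw [Matrix.mem_unitaryGroup_iff, hstar, mul_expand E hE2]
    rw [mul_comm z (star z), hzz, one_smul, one_smul, add_sub_cancel]
  · rw [Matrix.det_fin_two]
    simp only [Matrix.add_apply, Matrix.smul_apply, Matrix.sub_apply, Matrix.one_apply,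
      smul_eq_mul]
    norm_num
    have hzz' : (starRingEnd ℂ) z * z = 1 := hzz
    linear_combination (z - (starRingEnd ℂ) z)^2 * hdt +
      (z * (starRingEnd ℂ) z - ((starRingEnd ℂ) z)^2) * htr + hzz'

lemma Ucomm (E : M2) (hE2 : E * E = E) (z w : ℂ) :
    (z • E + star z • (1 - E)) * (w • E + star w • (1 - E)) =
      (w • E + star w • (1 - E)) * (z • E + star z • (1 - E)) := by
  rw [mul_expand E hE2, mul_expand E hE2, mul_comm z w, mul_comm (star z) (star w)]


lemma exists_proj_of_ns (A : M2) (hA : A ∈ Matrix.specialUnitaryGroup (Fin 2) ℂ)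
    (hns : A 0 1 ≠ 0 ∨ A 1 0 ≠ 0 ∨ A 0 0 ≠ A 1 1) :
    ∃ E : M2, E * E = E ∧ Eᴴ = E ∧ E 0 0 + E 1 1 = 1 ∧ E 0 0 * E 1 1 = E 0 1 * E 1 0 ∧
      ∀ C : M2, C ∈ Matrix.specialUnitaryGroup (Fin 2) ℂ → A * C = C * A →
        ∃ z : ℂ, ‖z‖ = 1 ∧ C = z • E + star z • (1 - E) := by
  obtain ⟨h11, h10, hn⟩ := su2_entries A hA
  have hb_or : A 0 1 ≠ 0 ∨ (A 0 0).im ≠ 0 := by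
    rcases hns with h | h | h
    · exact Or.inl h
    · left; intro hb0; exact h (by rw [h10, hb0, star_zero, neg_zero])
    · right; intro him
      exact h (by rw [h11, Complex.star_def, Complex.conj_eq_iff_im.mpr him])
  set a : ℂ := A 0 0 with ha
  set b : ℂ := A 0 1 with hb
  set r : ℝ := a.re with hr
  have hnsq : Complex.normSq a + Complex.normSq b = 1 := by
    have h := hn
    simp only [Complex.star_def] at h
    rw [Complex.mul_conj, Complex.mul_conj] at h
    exact_mod_cast h
  have hr2 : r ^ 2 < 1 := by
    have h1 : Complex.normSq a = r ^ 2 + a.im ^ 2 := by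
      rw [Complex.normSq_apply]; ring
    have h2 : (0:ℝ) ≤ Complex.normSq b := Complex.normSq_nonneg b
    rcases hb_or with h | h
    · have h3 : 0 < Complex.normSq b := Complex.normSq_pos.mpr h
      nlinarith [sq_nonneg a.im]
    · have h3 : 0 < a.im ^ 2 := by positivity
      nlinarith
  set s : ℝ := Real.sqrt (1 - r ^ 2) with hs
  have hs2 : s ^ 2 = 1 - r ^ 2 := Real.sq_sqrt (by linarith)
  have hspos : 0 < s := Real.sqrt_pos.mpr (by linarith)
  obtain ⟨t, htdef⟩ : ∃ t : ℂ, t = (s:ℂ) * Complex.I := ⟨_, rfl⟩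
  have ht2 : t ^ 2 = (r:ℂ) ^ 2 - 1 := by
    rw [htdef, mul_pow, Complex.I_sq]
    have h := congrArg (fun x : ℝ => (x : ℂ)) hs2
    push_cast at h
    rw [h]; ring
  have htne : t ≠ 0 := by
    rw [htdef]
    exact mul_ne_zero (by exact_mod_cast hspos.ne') Complex.I_ne_zero
  have h2t : (2:ℂ) * t ≠ 0 := mul_ne_zero two_ne_zero htne
  have hstart : star t = -t := by
    rw [htdef]
    simp [Complex.star_def]
  have hta : a + star a = 2 * (r:ℂ) := by
    rw [Complex.star_def, Complex.add_conj]
    push_cast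
    rfl
  have hn' : a * (starRingEnd ℂ) a + b * (starRingEnd ℂ) b = 1 := hn
  have hta' : a + (starRingEnd ℂ) a = 2 * (r:ℂ) := hta
  set E : M2 := ((2:ℂ) * t)⁻¹ • (A - ((r:ℂ) - t) • 1) with hE
  have hE00 : E 0 0 = ((2:ℂ)*t)⁻¹ * (a - ((r:ℂ) - t)) := by
    simp [hE, Matrix.smul_apply, Matrix.sub_apply, Matrix.one_apply, ha]
  have hE01 : E 0 1 = ((2:ℂ)*t)⁻¹ * b := by
    simp [hE, Matrix.smul_apply, Matrix.sub_apply, Matrix.one_apply, hb]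
  have hE10 : E 1 0 = ((2:ℂ)*t)⁻¹ * (-(star b)) := by
    simp [hE, Matrix.smul_apply, Matrix.sub_apply, Matrix.one_apply, h10]
  have hE11 : E 1 1 = ((2:ℂ)*t)⁻¹ * (star a - ((r:ℂ) - t)) := by
    simp [hE, Matrix.smul_apply, Matrix.sub_apply, Matrix.one_apply, h11]
  have hE2 : E * E = E := by
    rw [← Matrix.ext_iff]
    simp only [Fin.forall_fin_two, Matrix.mul_apply, Fin.sum_univ_two, hE00, hE01, hE10, hE11]
    refine ⟨⟨?_, ?_⟩, ?_, ?_⟩ <;> field_simp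
    · linear_combination -hn - ht2 + a*hta
    · linear_combination b*hta
    · linear_combination -star b*hta
    · linear_combination -ht2 - hn + star a*hta
  have hEs : Eᴴ = E := by
    rw [← Matrix.ext_iff]
    simp only [Fin.forall_fin_two, Matrix.conjTranspose_apply, hE00, hE01, hE10, hE11,
      star_mul', star_sub, star_neg, star_star, star_inv₀, star_ofNat, hstart]
    have hneg : ((2:ℂ) * -t)⁻¹ = -((2:ℂ)*t)⁻¹ := by rw [mul_neg, inv_neg]
    rw [hneg]
    have hsr : star (r:ℂ) = r := Complex.conj_ofReal r
    refine ⟨⟨?_, ?_⟩, ?_, ?_⟩ <;> field_simp <;>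
      first
        | ring1
        | linear_combination 2*t*hta'
        | linear_combination -2*t*hta'
        | linear_combination hta'
        | linear_combination -hta'
        | linear_combination (2*t)*(2*t)*hta'
        | linear_combination -(2*t)*(2*t)*hta'
        | linear_combination -hta + hsr

  have htrE : E 0 0 + E 1 1 = 1 := by
    rw [hE00, hE11]
    field_simp
    linear_combination hta
  have hdtE : E 0 0 * E 1 1 = E 0 1 * E 1 0 := by
    rw [hE00, hE11, hE01, hE10]
    field_simp
    first
      | linear_combination hn' + ht2 - ((r:ℂ)-t)*hta'
      | linear_combination (2*t)*(2*t)*(hn' + ht2 - ((r:ℂ)-t)*hta')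
      | linear_combination -(hn' + ht2 - ((r:ℂ)-t)*hta')
      | linear_combination hn + ht2 - ((r:ℂ)-t)*hta
  refine ⟨E, hE2, hEs, htrE, hdtE, ?_⟩
  intro C hC hAC
  obtain ⟨α, β, hCp⟩ := commutant A C hAC hns
  obtain ⟨z, hz⟩ : ∃ z : ℂ, z = α + β * ((r:ℂ) + t) := ⟨_, rfl⟩
  obtain ⟨w, hw⟩ : ∃ w : ℂ, w = α + β * ((r:ℂ) - t) := ⟨_, rfl⟩
  have hC00 : C 0 0 = α + β * a := by simp [hCp, Matrix.one_apply, ha]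
  have hC01 : C 0 1 = β * b := by simp [hCp, Matrix.one_apply, hb]
  have hC10 : C 1 0 = β * (-(star b)) := by simp [hCp, Matrix.one_apply, h10]
  have hC11 : C 1 1 = α + β * star a := by simp [hCp, Matrix.one_apply, h11]
  have hCzw : C = z • E + w • (1 - E) := by
    rw [hCp, hz, hw, hE]
    match_scalars <;> field_simp <;> ring1
  have hdetC : C.det = 1 := (Matrix.mem_specialUnitaryGroup_iff.mp hC).2
  have hzw : z * w = 1 := by
    rw [Matrix.det_fin_two, hC00, hC01, hC10, hC11] at hdetC
    rw [hz, hw]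
    linear_combination hdetC - α*β*hta - β^2*ht2 - β^2*hn
  have hCu : star C * C = 1 := (Matrix.mem_unitaryGroup_iff'.mp (Matrix.mem_specialUnitaryGroup_iff.mp hC).1)
  have hCstar : star C = star z • E + star w • (1 - E) := by
    conv_lhs => rw [hCzw]
    rw [Matrix.star_eq_conjTranspose, starDecomp E hEs]
  have hprodmat : (star z * z) • E + (star w * w) • (1 - E) = 1 := by
    rw [← mul_expand E hE2, ← hCstar, ← hCzw, hCu]
  have hsum : star z * z + star w * w = 2 := by
    have h0 := congrFun (congrFun hprodmat 0) 0
    have h1 := congrFun (congrFun hprodmat 1) 1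
    simp only [Matrix.add_apply, Matrix.smul_apply, Matrix.sub_apply, Matrix.one_apply,
      smul_eq_mul] at h0 h1
    norm_num at h0 h1
    simp only [← Complex.star_def] at h0 h1
    linear_combination h0 + h1 + (star w * w - star z * z) * htrE
  have hprod : (star z * z) * (star w * w) = 1 := by
    calc (star z * z) * (star w * w) = star (z * w) * (z * w) := by
          rw [star_mul']; ring
    _ = 1 := by rw [hzw, star_one, one_mul]
  have hz1 : star z * z = 1 := by
    have hq : (star z * z - 1) ^ 2 = 0 := by
      linear_combination (star z * z) * hsum - hprod
    have h := pow_eq_zero_iff (n := 2) (by norm_num) |>.mp hq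
    exact sub_eq_zero.mp h
  have hnormz : ‖z‖ = 1 := by
    have h1 : Complex.normSq z = 1 := by
      have : ((Complex.normSq z : ℂ)) = 1 := by
        rw [← Complex.mul_conj, ← Complex.star_def]; linear_combination hz1
      exact_mod_cast this
    rw [Complex.norm_def, h1, Real.sqrt_one]
  have hwz : w = star z := by
    calc w = (star z * z) * w := by rw [hz1, one_mul]
    _ = star z * (z * w) := by ring
    _ = star z := by rw [hzw, mul_one]
  exact ⟨z, hnormz, by rw [hCzw, hwz]⟩

end Proj

lemma scalar_decomp (C : M2) (hC : C ∈ Matrix.specialUnitaryGroup (Fin 2) ℂ)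
    (h01 : C 0 1 = 0) (h10 : C 1 0 = 0) (hd : C 0 0 = C 1 1) :
    ∃ z : ℂ, ‖z‖ = 1 ∧ ∀ E : M2, C = z • E + star z • (1 - E) := by
  have hdet : C.det = 1 := (Matrix.mem_specialUnitaryGroup_iff.mp hC).2
  rw [Matrix.det_fin_two, h01, h10, ← hd] at hdet
  have hc1 : C 0 0 = 1 ∨ C 0 0 = -1 := mul_self_eq_one_iff.mp (by linear_combination hdet)
  have hCs : C = C 0 0 • (1 : M2) := by
    rw [← Matrix.ext_iff]
    simp only [Fin.forall_fin_two, Matrix.smul_apply, Matrix.one_apply, smul_eq_mul]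
    norm_num [h01, h10, ← hd]
  have hstarc : star (C 0 0) = C 0 0 := by
    rcases hc1 with h | h <;> rw [h] <;> simp
  refine ⟨C 0 0, ?_, ?_⟩
  · rcases hc1 with h | h <;> rw [h] <;> simp
  · intro E
    rw [hstarc, ← smul_add, add_sub_cancel]
    exact hCs

lemma E0_props : (!![(1:ℂ),0;0,0] : M2) * !![(1:ℂ),0;0,0] = !![(1:ℂ),0;0,0] ∧
    (!![(1:ℂ),0;0,0] : M2)ᴴ = !![(1:ℂ),0;0,0] ∧
    (!![(1:ℂ),0;0,0] : M2) 0 0 + (!![(1:ℂ),0;0,0] : M2) 1 1 = 1 ∧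
    (!![(1:ℂ),0;0,0] : M2) 0 0 * (!![(1:ℂ),0;0,0] : M2) 1 1 =
      (!![(1:ℂ),0;0,0] : M2) 0 1 * (!![(1:ℂ),0;0,0] : M2) 1 0 := by
  refine ⟨?_, ?_, by norm_num, by norm_num⟩
  · rw [← Matrix.ext_iff]
    simp [Fin.forall_fin_two, Matrix.mul_apply, Fin.sum_univ_two]
  · rw [← Matrix.ext_iff]
    simp [Fin.forall_fin_two, Matrix.conjTranspose_apply]

lemma main_decomp (v : Fin 6 → SU2)
    (hc : ∀ i j, (v i).1 * (v j).1 = (v j).1 * (v i).1) :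
    ∃ E : M2, E * E = E ∧ Eᴴ = E ∧ E 0 0 + E 1 1 = 1 ∧ E 0 0 * E 1 1 = E 0 1 * E 1 0 ∧
      ∃ z : Fin 6 → ℂ, ∀ i, ‖z i‖ = 1 ∧ (v i).1 = z i • E + star (z i) • (1 - E) := by
  by_cases hns : ∃ i, (v i).1 0 1 ≠ 0 ∨ (v i).1 1 0 ≠ 0 ∨ (v i).1 0 0 ≠ (v i).1 1 1
  · obtain ⟨i, hi⟩ := hns
    obtain ⟨E, h1, h2, h3, h4, hdec⟩ := exists_proj_of_ns (v i).1 (v i).2 hi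
    choose z hz1 hz2 using fun j => hdec (v j).1 (v j).2 (hc i j)
    exact ⟨E, h1, h2, h3, h4, z, fun j => ⟨hz1 j, hz2 j⟩⟩
  · push_neg at hns
    choose z hz1 hz2 using fun j =>
      scalar_decomp (v j).1 (v j).2 (hns j).1 (hns j).2.1 (hns j).2.2
    obtain ⟨p1, p2, p3, p4⟩ := E0_props
    exact ⟨_, p1, p2, p3, p4, z, fun j => ⟨hz1 j, hz2 j _⟩⟩



end AbelianAux
end AbelianAux


/-- Any tuple in `SU(2)⁶` whose six coordinates pairwise commute (an abelian
representation) satisfies system `(Fₙ)`, and lies in the connected component of `F`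
containing the identity tuple. -/
theorem abelian_in_component_of_trivial (n : ℕ) (A₁ B₁ A₂ B₂ A₃ B₃ : SU2)
    (hcomm : ∀ x ∈ [A₁, B₁, A₂, B₂, A₃, B₃], ∀ y ∈ [A₁, B₁, A₂, B₂, A₃, B₃],
      x * y = y * x) :
    ∃ (hx : (A₁, B₁, A₂, B₂, A₃, B₃) ∈ Fset n)
      (h1 : ((1, 1, 1, 1, 1, 1) : SU2 × SU2 × SU2 × SU2 × SU2 × SU2) ∈ Fset n),
      (⟨(A₁, B₁, A₂, B₂, A₃, B₃), hx⟩ : Fset n) ∈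
        connectedComponent (⟨(1, 1, 1, 1, 1, 1), h1⟩ : Fset n) := by
  classical
  have hx : (A₁, B₁, A₂, B₂, A₃, B₃) ∈ Fset n := by
    apply AbelianAux.mem_Fset <;> exact hcomm _ (by simp) _ (by simp)
  have h1 : ((1, 1, 1, 1, 1, 1) : SU2 × SU2 × SU2 × SU2 × SU2 × SU2) ∈ Fset n :=
    AbelianAux.mem_Fset n 1 1 1 1 1 1 rfl rfl rfl rfl rfl
  have hc : ∀ i j : Fin 6, ((![A₁, B₁, A₂, B₂, A₃, B₃] : Fin 6 → SU2) i).1 *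
      ((![A₁, B₁, A₂, B₂, A₃, B₃] : Fin 6 → SU2) j).1 =
      ((![A₁, B₁, A₂, B₂, A₃, B₃] : Fin 6 → SU2) j).1 *
      ((![A₁, B₁, A₂, B₂, A₃, B₃] : Fin 6 → SU2) i).1 := by
    intro i j
    have h := hcomm (![A₁, B₁, A₂, B₂, A₃, B₃] i)
      (by fin_cases i <;> simp [show (![A₁, B₁, A₂, B₂, A₃, B₃] : Fin 6 → SU2) 5 = B₃ from rfl])
      (![A₁, B₁, A₂, B₂, A₃, B₃] j)
      (by fin_cases j <;> simp [show (![A₁, B₁, A₂, B₂, A₃, B₃] : Fin 6 → SU2) 5 = B₃ from rfl])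
    exact congrArg Subtype.val h
  obtain ⟨E, hE2, hEs, htrE, hdtE, z, hz⟩ := AbelianAux.main_decomp _ hc
  have hUmem : ∀ θ : ℝ, Complex.exp (θ * Complex.I) • E +
      star (Complex.exp (θ * Complex.I)) • (1 - E) ∈
      Matrix.specialUnitaryGroup (Fin 2) ℂ := fun θ =>
    AbelianAux.Umem E hE2 hEs htrE hdtE _
      (by exact Complex.norm_exp_ofReal_mul_I θ)
  set g : ℝ → SU2 := fun θ => ⟨_, hUmem θ⟩ with hg
  have hgcomm : ∀ θ₁ θ₂ : ℝ, g θ₁ * g θ₂ = g θ₂ * g θ₁ := fun θ₁ θ₂ =>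
    Subtype.ext (AbelianAux.Ucomm E hE2 _ _)
  set Ψ : ℝ × ℝ × ℝ × ℝ × ℝ × ℝ → ↥(Fset n) := fun θ =>
    ⟨(g θ.1, g θ.2.1, g θ.2.2.1, g θ.2.2.2.1, g θ.2.2.2.2.1, g θ.2.2.2.2.2),
      AbelianAux.mem_Fset n _ _ _ _ _ _ (hgcomm _ _) (hgcomm _ _) (hgcomm _ _)
        (hgcomm _ _) (hgcomm _ _)⟩ with hΨ
  have hgc : Continuous g := by
    apply Continuous.subtype_mk
    have h1 : Continuous fun θ : ℝ => Complex.exp ((θ : ℂ) * Complex.I) :=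
      (Complex.continuous_ofReal.mul continuous_const).cexp
    exact (h1.smul continuous_const).add ((continuous_star.comp h1).smul continuous_const)
  have hΨc : Continuous Ψ := by
    apply Continuous.subtype_mk
    refine (hgc.comp continuous_fst).prodMk ?_
    refine (hgc.comp (continuous_fst.comp continuous_snd)).prodMk ?_
    refine (hgc.comp (continuous_fst.comp (continuous_snd.comp continuous_snd))).prodMk ?_
    refine (hgc.comp (continuous_fst.comp (continuous_snd.comp
      (continuous_snd.comp continuous_snd)))).prodMk ?_
    refine (hgc.comp (continuous_fst.comp (continuous_snd.comp (continuous_snd.comp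
      (continuous_snd.comp continuous_snd))))).prodMk ?_
    exact hgc.comp (continuous_snd.comp (continuous_snd.comp (continuous_snd.comp
      (continuous_snd.comp continuous_snd))))
  have hg1 : g 0 = 1 := by
    apply Subtype.ext
    show Complex.exp ((0:ℝ) * Complex.I) • E + star (Complex.exp ((0:ℝ) * Complex.I)) • (1 - E)
      = (1 : AbelianAux.M2)
    rw [Complex.ofReal_zero, zero_mul, Complex.exp_zero, star_one, one_smul, one_smul,
      add_sub_cancel]
  have hexp : ∀ i : Fin 6, Complex.exp (((z i).arg : ℂ) * Complex.I) = z i := by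
    intro i
    have h := Complex.norm_mul_exp_arg_mul_I (z i)
    rw [show ‖z i‖ = 1 by exact (hz i).1] at h
    simpa using h
  have hgz : ∀ i : Fin 6, g ((z i).arg) = (![A₁, B₁, A₂, B₂, A₃, B₃] : Fin 6 → SU2) i := by
    intro i
    apply Subtype.ext
    show Complex.exp (((z i).arg : ℂ) * Complex.I) • E +
      star (Complex.exp (((z i).arg : ℂ) * Complex.I)) • (1 - E) = _
    rw [hexp i, ((hz i).2).symm]
  have hΨ0 : Ψ (0, 0, 0, 0, 0, 0) = ⟨(1, 1, 1, 1, 1, 1), h1⟩ := by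
    apply Subtype.ext
    show (g 0, g 0, g 0, g 0, g 0, g 0) = (1, 1, 1, 1, 1, 1)
    rw [hg1]
  have hΨx : Ψ ((z 0).arg, (z 1).arg, (z 2).arg, (z 3).arg, (z 4).arg, (z 5).arg) =
      ⟨(A₁, B₁, A₂, B₂, A₃, B₃), hx⟩ := by
    apply Subtype.ext
    show (g ((z 0).arg), g ((z 1).arg), g ((z 2).arg), g ((z 3).arg), g ((z 4).arg),
      g ((z 5).arg)) = (A₁, B₁, A₂, B₂, A₃, B₃)
    rw [hgz 0, hgz 1, hgz 2, hgz 3, hgz 4, hgz 5]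
    rfl
  refine ⟨hx, h1, ?_⟩
  have hconn : IsConnected (Set.range Ψ) := isConnected_range hΨc
  exact hconn.subset_connectedComponent ⟨_, hΨ0⟩ ⟨_, hΨx⟩
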